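/- For general points, if d ≥ 6n and n ≥ 1, then ℓ(L(d, d, 6^n)) = d − 6n. Since v(L(d, d, 6^n)) = d − 21n, this system is special. -/

import Mathlib

open MvPolynomial

/-- The iterated partial derivative corresponding to the multi-index `ν`. -/
noncomputable def mderiv (ν : Fin 3 → ℕ) :
    MvPolynomial (Fin 3) ℂ →ₗ[ℂ] MvPolynomial (Fin 3) ℂ :=
  ((pderiv (R := ℂ) (0 : Fin 3)).toLinearMap ^ ν 0) ∘ₗ
  ((pderiv (R := ℂ) (1 : Fin 3)).toLinearMap ^ ν 1) ∘ₗ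
  ((pderiv (R := ℂ) (2 : Fin 3)).toLinearMap ^ ν 2)

/-- The linear system `L(d; m)` of homogeneous forms of degree `d` in three variables
all of whose partial derivatives of order `< m i` vanish at the point `p i`,
i.e. plane curves of degree `d` with multiplicity at least `m i` at `p i`. -/
noncomputable def linSys {k : ℕ} (p : Fin k → Fin 3 → ℂ) (d : ℕ) (m : Fin k → ℕ) :
    Submodule ℂ (MvPolynomial (Fin 3) ℂ) :=
  (homogeneousSubmodule (Fin 3) ℂ d) ⊓
    ⨅ (i : Fin k), ⨅ (ν : Fin 3 → ℕ), ⨅ (_ : ν 0 + ν 1 + ν 2 < m i),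
      LinearMap.ker ((aeval (p i)).toLinearMap ∘ₗ mderiv ν)

/-- The projective dimension `ℓ` of the linear system (`-1` means empty). -/
noncomputable def projDim {k : ℕ} (p : Fin k → Fin 3 → ℂ) (d : ℕ) (m : Fin k → ℕ) : ℤ :=
  (Module.finrank ℂ (linSys p d m) : ℤ) - 1

/-- The virtual dimension `v = d(d+3)/2 - ∑ mᵢ(mᵢ+1)/2`. -/
def virtDim {k : ℕ} (d : ℕ) (m : Fin k → ℕ) : ℤ :=
  ((d : ℤ) * (d + 3)) / 2 - ∑ i : Fin k, ((m i : ℤ) * (m i + 1)) / 2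

/-- The quasi-homogeneous multiplicity vector `(m₀, 6, …, 6)` on `n + 1` points. -/
def qh (n m0 : ℕ) : Fin (n + 1) → ℕ := fun i => if i = 0 then m0 else 6

/-- A property `Q` of configurations of `k` points of `ℙ²` (given by nonzero homogeneous
coordinate vectors) holds for points in general position: there is a nonzero polynomial
in the coordinates such that `Q` holds whenever it does not vanish. -/
def Generically (k : ℕ) (Q : (Fin k → Fin 3 → ℂ) → Prop) : Prop :=
  ∃ P : MvPolynomial (Fin k × Fin 3) ℂ, P ≠ 0 ∧
    ∀ p : Fin k → Fin 3 → ℂ, (∀ i, p i ≠ 0) →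
      eval (fun x => p x.1 x.2) P ≠ 0 → Q p

/-! ### Auxiliary lemmas -/

lemma pderiv_pow_zero {σ : Type*} {i : σ} {a : MvPolynomial σ ℂ} (h : pderiv i a = 0) (n : ℕ) :
    pderiv i (a ^ n) = 0 := by
  rw [Derivation.leibniz_pow, h]; simp

lemma pderiv_mul_zero {σ : Type*} {i : σ} {a b : MvPolynomial σ ℂ}
    (ha : pderiv i a = 0) (hb : pderiv i b = 0) : pderiv i (a * b) = 0 := by
  rw [pderiv_mul, ha, hb]; simp

lemma pderiv_pow_apply {i : Fin 3} {l M : MvPolynomial (Fin 3) ℂ}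
    (hl : pderiv i l = 1) (hM : pderiv i M = 0) (k : ℕ) :
    ∀ n : ℕ, ((pderiv (R := ℂ) i).toLinearMap ^ k) (l ^ n * M)
      = (n.descFactorial k) • (l ^ (n - k) * M) := by
  induction k with
  | zero => intro n; simp
  | succ k ih =>
    intro n
    rw [pow_succ, Module.End.mul_apply]
    have hstep : (pderiv (R := ℂ) i).toLinearMap (l ^ n * M) = n • (l ^ (n - 1) * M) := by
      show (pderiv i) (l ^ n * M) = n • (l ^ (n - 1) * M)
      rw [pderiv_mul, hM, mul_zero, add_zero, Derivation.leibniz_pow, hl]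
      simp [smul_eq_mul, mul_assoc]
    rw [hstep]
    cases n with
    | zero => simp
    | succ m =>
      rw [map_nsmul, Nat.succ_sub_one, ih m, smul_smul, Nat.succ_descFactorial_succ,
        Nat.succ_sub_succ]

lemma pderiv_mem_pow {J : Ideal (MvPolynomial (Fin 3) ℂ)} (i : Fin 3) :
    ∀ m : ℕ, ∀ F ∈ J ^ (m + 1), pderiv i F ∈ J ^ m := by
  intro m
  induction m with
  | zero => intro F _; simp [Ideal.one_eq_top]
  | succ m ih =>
    intro F hF
    rw [pow_succ] at hF
    refine Submodule.mul_induction_on hF ?_ ?_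
    · intro a ha b hb
      rw [pderiv_mul]
      refine add_mem ?_ (Ideal.mul_mem_right _ _ ha)
      rw [pow_succ]
      exact Ideal.mul_mem_mul (ih a ha) hb
    · intro x y hx hy
      rw [map_add]; exact add_mem hx hy

lemma pderiv_pow_mem {J : Ideal (MvPolynomial (Fin 3) ℂ)} (i : Fin 3) (k : ℕ) :
    ∀ m : ℕ, ∀ F ∈ J ^ m, ((pderiv (R := ℂ) i).toLinearMap ^ k) F ∈ J ^ (m - k) := by
  induction k with
  | zero => intro m F hF; simpa using hF
  | succ k ih =>
    intro m F hF
    rw [pow_succ, Module.End.mul_apply]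
    cases m with
    | zero => simp
    | succ m =>
      have := ih m (pderiv i F) (pderiv_mem_pow i m F hF)
      simpa [Nat.succ_sub_succ] using this

lemma vanish_of_mem_pow {q : Fin 3 → ℂ} {J : Ideal (MvPolynomial (Fin 3) ℂ)}
    (hqJ : ∀ g ∈ J, aeval q g = 0) {m : ℕ} {F : MvPolynomial (Fin 3) ℂ} (hF : F ∈ J ^ m)
    {ν : Fin 3 → ℕ} (hν : ν 0 + ν 1 + ν 2 < m) :
    aeval q (mderiv ν F) = 0 := by
  have h2 := pderiv_pow_mem 2 (ν 2) m F hF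
  have h1 := pderiv_pow_mem 1 (ν 1) _ _ h2
  have h0 := pderiv_pow_mem 0 (ν 0) _ _ h1
  have hmem : mderiv ν F ∈ J ^ (m - ν 2 - ν 1 - ν 0) := by
    simpa [mderiv, LinearMap.comp_apply] using h0
  have hne : m - ν 2 - ν 1 - ν 0 ≠ 0 := by omega
  exact hqJ _ (Ideal.pow_le_self hne hmem)

lemma aeval_zero_of_mem_span {q : Fin 3 → ℂ} {s : Set (MvPolynomial (Fin 3) ℂ)}
    (h : ∀ g ∈ s, aeval q g = 0) : ∀ g ∈ Ideal.span s, aeval q g = 0 := by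
  intro g hg
  have hle : Ideal.span s ≤ RingHom.ker (aeval q : MvPolynomial (Fin 3) ℂ →ₐ[ℂ] ℂ).toRingHom :=
    Ideal.span_le.mpr fun x hx => by simpa [RingHom.mem_ker] using h x hx
  simpa [RingHom.mem_ker] using hle hg

noncomputable def subAlg (c₁ c₂ : ℂ) : MvPolynomial (Fin 3) ℂ →ₐ[ℂ] MvPolynomial (Fin 3) ℂ :=
  aeval ![X 0 - C c₁ * X 2, X 1 - C c₂ * X 2, X 2]

lemma subAlg_comp (c₁ c₂ c₁' c₂' : ℂ) :
    (subAlg c₁ c₂).comp (subAlg c₁' c₂') = subAlg (c₁ + c₁') (c₂ + c₂') := by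
  apply MvPolynomial.algHom_ext
  intro i
  fin_cases i <;>
    simp [subAlg, aeval_X, algebraMap_eq] <;> ring

lemma subAlg_inv (c₁ c₂ : ℂ) (F : MvPolynomial (Fin 3) ℂ) :
    subAlg c₁ c₂ (subAlg (-c₁) (-c₂) F) = F := by
  have h := subAlg_comp c₁ c₂ (-c₁) (-c₂)
  simp only [add_neg_cancel] at h
  have h2 : subAlg 0 0 = AlgHom.id ℂ _ := by
    apply MvPolynomial.algHom_ext
    intro i
    fin_cases i <;> simp [subAlg, aeval_X]
  have := congrArg (fun (g : MvPolynomial (Fin 3) ℂ →ₐ[ℂ] MvPolynomial (Fin 3) ℂ) => g F) (h.trans h2)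
  simpa using this

lemma subAlg_injective (c₁ c₂ : ℂ) : Function.Injective (subAlg c₁ c₂) := by
  intro x y h
  have hx := subAlg_inv (-c₁) (-c₂) x
  have hy := subAlg_inv (-c₁) (-c₂) y
  simp only [neg_neg] at hx hy
  rw [← hx, ← hy, h]

lemma subAlg_isHomogeneous {c₁ c₂ : ℂ} {F : MvPolynomial (Fin 3) ℂ} {m : ℕ}
    (hF : F.IsHomogeneous m) : (subAlg c₁ c₂ F).IsHomogeneous m := by
  have := hF.aeval (![X 0 - C c₁ * X 2, X 1 - C c₂ * X 2, X 2] : Fin 3 → MvPolynomial (Fin 3) ℂ)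
    (n := 1) ?_
  · simpa only [one_mul, subAlg] using this
  · intro i
    fin_cases i
    · exact (isHomogeneous_X _ _).sub (isHomogeneous_C_mul_X _ _)
    · exact (isHomogeneous_X _ _).sub (isHomogeneous_C_mul_X _ _)
    · exact isHomogeneous_X _ _

lemma subAlg_monomial (c₁ c₂ : ℂ) (e : Fin 3 →₀ ℕ) (cf : ℂ) :
    subAlg c₁ c₂ (monomial e cf) = C cf * ((X 0 - C c₁ * X 2 : MvPolynomial (Fin 3) ℂ) ^ e 0 *
      ((X 1 - C c₂ * X 2 : MvPolynomial (Fin 3) ℂ) ^ e 1 * (X 2 : MvPolynomial (Fin 3) ℂ) ^ e 2)) := by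
  rw [subAlg, aeval_monomial, Finsupp.prod_pow]
  rw [Fin.prod_univ_three]
  simp [algebraMap_eq, mul_assoc]

lemma pd0u (c₁ : ℂ) : pderiv (R := ℂ) (0 : Fin 3) (X 0 - C c₁ * X 2 : MvPolynomial (Fin 3) ℂ) = 1 := by
  simp [pderiv_X_self, pderiv_C_mul, pderiv_X_of_ne (show (2:Fin 3) ≠ 0 by decide)]

lemma pd0v (c₂ : ℂ) : pderiv (R := ℂ) (0 : Fin 3) (X 1 - C c₂ * X 2 : MvPolynomial (Fin 3) ℂ) = 0 := by
  simp [pderiv_C_mul, pderiv_X_of_ne (show (2:Fin 3) ≠ 0 by decide),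
    pderiv_X_of_ne (show (1:Fin 3) ≠ 0 by decide)]

lemma pd1v (c₂ : ℂ) : pderiv (R := ℂ) (1 : Fin 3) (X 1 - C c₂ * X 2 : MvPolynomial (Fin 3) ℂ) = 1 := by
  simp [pderiv_X_self, pderiv_C_mul, pderiv_X_of_ne (show (2:Fin 3) ≠ 1 by decide)]

lemma pd1u (c₁ : ℂ) : pderiv (R := ℂ) (1 : Fin 3) (X 0 - C c₁ * X 2 : MvPolynomial (Fin 3) ℂ) = 0 := by
  simp [pderiv_C_mul, pderiv_X_of_ne (show (2:Fin 3) ≠ 1 by decide),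
    pderiv_X_of_ne (show (0:Fin 3) ≠ 1 by decide)]

lemma pd0X2 : pderiv (R := ℂ) (0 : Fin 3) (X 2 : MvPolynomial (Fin 3) ℂ) = 0 :=
  pderiv_X_of_ne (by decide)

lemma pd1X2 : pderiv (R := ℂ) (1 : Fin 3) (X 2 : MvPolynomial (Fin 3) ℂ) = 0 :=
  pderiv_X_of_ne (by decide)

lemma K1 (c₁ c₂ : ℂ) (q : Fin 3 → ℂ) (a b : ℕ) (e : Fin 3 →₀ ℕ) (cf : ℂ) :
    aeval q (mderiv ![a, b, 0] (subAlg c₁ c₂ (monomial e cf))) =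
      cf * ((e 0).descFactorial a : ℂ) * ((e 1).descFactorial b : ℂ)
        * (aeval q (X 0 - C c₁ * X 2 : MvPolynomial (Fin 3) ℂ)) ^ (e 0 - a)
        * (aeval q (X 1 - C c₂ * X 2 : MvPolynomial (Fin 3) ℂ)) ^ (e 1 - b) * (q 2) ^ (e 2) := by
  rw [subAlg_monomial]
  have h1 : (C cf * ((X 0 - C c₁ * X 2 : MvPolynomial (Fin 3) ℂ) ^ e 0 *
      ((X 1 - C c₂ * X 2 : MvPolynomial (Fin 3) ℂ) ^ e 1 * (X 2 : MvPolynomial (Fin 3) ℂ) ^ e 2)))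
      = (X 1 - C c₂ * X 2 : MvPolynomial (Fin 3) ℂ) ^ e 1 *
        (C cf * (X 0 - C c₁ * X 2 : MvPolynomial (Fin 3) ℂ) ^ e 0 * (X 2 : MvPolynomial (Fin 3) ℂ) ^ e 2) := by
    ring
  have hmd : mderiv ![a, b, 0] (C cf * ((X 0 - C c₁ * X 2 : MvPolynomial (Fin 3) ℂ) ^ e 0 *
      ((X 1 - C c₂ * X 2 : MvPolynomial (Fin 3) ℂ) ^ e 1 * (X 2 : MvPolynomial (Fin 3) ℂ) ^ e 2)))
      = ((pderiv (R := ℂ) (0 : Fin 3)).toLinearMap ^ a)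
        (((pderiv (R := ℂ) (1 : Fin 3)).toLinearMap ^ b)
          (C cf * ((X 0 - C c₁ * X 2 : MvPolynomial (Fin 3) ℂ) ^ e 0 *
            ((X 1 - C c₂ * X 2 : MvPolynomial (Fin 3) ℂ) ^ e 1 * (X 2 : MvPolynomial (Fin 3) ℂ) ^ e 2)))) := by
    simp [mderiv, LinearMap.comp_apply]
  rw [hmd, h1]
  rw [pderiv_pow_apply (pd1v c₂) ?hM1 b (e 1)]
  case hM1 =>
    exact pderiv_mul_zero (pderiv_mul_zero pderiv_C (pderiv_pow_zero (pd1u c₁) _))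
      (pderiv_pow_zero pd1X2 _)
  rw [map_nsmul]
  have h2 : ((X 1 - C c₂ * X 2 : MvPolynomial (Fin 3) ℂ) ^ (e 1 - b) *
      (C cf * (X 0 - C c₁ * X 2 : MvPolynomial (Fin 3) ℂ) ^ e 0 * (X 2 : MvPolynomial (Fin 3) ℂ) ^ e 2))
      = (X 0 - C c₁ * X 2 : MvPolynomial (Fin 3) ℂ) ^ e 0 *
        (C cf * (X 1 - C c₂ * X 2 : MvPolynomial (Fin 3) ℂ) ^ (e 1 - b) * (X 2 : MvPolynomial (Fin 3) ℂ) ^ e 2) := by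
    ring
  rw [h2, pderiv_pow_apply (pd0u c₁) ?hM0 a (e 0)]
  case hM0 =>
    exact pderiv_mul_zero (pderiv_mul_zero pderiv_C (pderiv_pow_zero (pd0v c₂) _))
      (pderiv_pow_zero pd0X2 _)
  rw [map_nsmul, map_nsmul]
  simp only [map_mul, map_pow, aeval_C, aeval_X, algebraMap_eq, Algebra.algebraMap_self_apply]
  simp only [nsmul_eq_mul]
  ring

lemma aeval_mderiv_subAlg (c₁ c₂ : ℂ) (q : Fin 3 → ℂ) (a b : ℕ) (G : MvPolynomial (Fin 3) ℂ) :
    aeval q (mderiv ![a, b, 0] (subAlg c₁ c₂ G)) =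
      ∑ μ ∈ G.support, coeff μ G * ((μ 0).descFactorial a : ℂ) * ((μ 1).descFactorial b : ℂ)
        * (aeval q (X 0 - C c₁ * X 2 : MvPolynomial (Fin 3) ℂ)) ^ (μ 0 - a)
        * (aeval q (X 1 - C c₂ * X 2 : MvPolynomial (Fin 3) ℂ)) ^ (μ 1 - b) * (q 2) ^ (μ 2) := by
  conv_lhs => rw [G.as_sum]
  rw [map_sum, map_sum, map_sum]
  exact Finset.sum_congr rfl fun μ _ => K1 c₁ c₂ q a b μ (coeff μ G)

lemma homog_support_sum {G : MvPolynomial (Fin 3) ℂ} {d : ℕ} (h : G.IsHomogeneous d)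
    {μ : Fin 3 →₀ ℕ} (hμ : μ ∈ G.support) : μ 0 + μ 1 + μ 2 = d := by
  have hc : coeff μ G ≠ 0 := mem_support_iff.mp hμ
  have hw := h hc
  rw [Finsupp.weight_apply, Finsupp.sum_fintype] at hw
  · rw [← hw, Fin.sum_univ_three]; simp
  · intro i; simp

lemma prod_mem_pow {R : Type*} [CommRing R] (J : Ideal R) {ι : Type*} (s : Finset ι)
    (f : ι → R) (h : ∀ j ∈ s, f j ∈ J) : (∏ j ∈ s, f j) ∈ J ^ s.card := by
  classical
  induction s using Finset.induction with
  | empty => simp [Ideal.one_eq_top]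
  | @insert x s hx ih =>
    rw [Finset.prod_insert hx, Finset.card_insert_of_notMem hx, pow_succ']
    exact Ideal.mul_mem_mul (h _ (Finset.mem_insert_self _ _))
      (ih fun j hj => h j (Finset.mem_insert_of_mem hj))
lemma support_structure {d : ℕ} {c₁ c₂ : ℂ} {q : Fin 3 → ℂ}
    (hu0 : aeval q (X 0 - C c₁ * X 2 : MvPolynomial (Fin 3) ℂ) = 0)
    (hv0 : aeval q (X 1 - C c₂ * X 2 : MvPolynomial (Fin 3) ℂ) = 0)
    (hq2 : q 2 ≠ 0)
    {F : MvPolynomial (Fin 3) ℂ} (hFhom : F.IsHomogeneous d)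
    (hcond : ∀ a b : ℕ, a + b < d → aeval q (mderiv ![a, b, 0] F) = 0) :
    ∀ μ ∈ (subAlg (-c₁) (-c₂) F).support, μ 2 = 0 ∧ μ 0 + μ 1 = d := by
  intro μ hμ
  set G := subAlg (-c₁) (-c₂) F with hG
  have hGhom : G.IsHomogeneous d := subAlg_isHomogeneous hFhom
  have hsum : μ 0 + μ 1 + μ 2 = d := homog_support_sum hGhom hμ
  have hz : μ 2 = 0 := by
    by_contra h2
    have hab : μ 0 + μ 1 < d := by omega
    have hc := hcond (μ 0) (μ 1) hab
    rw [(subAlg_inv c₁ c₂ F).symm, ← hG, aeval_mderiv_subAlg, hu0, hv0] at hc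
    rw [Finset.sum_eq_single_of_mem μ hμ ?other] at hc
    · simp only [Nat.sub_self, pow_zero, Nat.descFactorial_self] at hc
      have : coeff μ G = 0 := by
        have h1 : ((Nat.factorial (μ 0) : ℂ)) ≠ 0 := Nat.cast_ne_zero.mpr (Nat.factorial_ne_zero _)
        have h2' : ((Nat.factorial (μ 1) : ℂ)) ≠ 0 := Nat.cast_ne_zero.mpr (Nat.factorial_ne_zero _)
        have h3 : (q 2) ^ μ 2 ≠ 0 := pow_ne_zero _ hq2
        simp only [mul_eq_zero] at hc
        simp_all
      exact mem_support_iff.mp hμ this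
    case other =>
      intro μ' hμ' hne
      have hsum' : μ' 0 + μ' 1 + μ' 2 = d := homog_support_sum hGhom hμ'
      rcases Nat.lt_trichotomy (μ' 0) (μ 0) with h | h | h
      · have : (μ' 0).descFactorial (μ 0) = 0 := Nat.descFactorial_eq_zero_iff_lt.mpr h
        simp [this]
      · rcases Nat.lt_trichotomy (μ' 1) (μ 1) with h' | h' | h'
        · have : (μ' 1).descFactorial (μ 1) = 0 := Nat.descFactorial_eq_zero_iff_lt.mpr h'
          simp [this]
        · exfalso
          apply hne
          ext i
          fin_cases i
          · exact h
          · exact h'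
          · show μ' 2 = μ 2
            omega
        · have : (0 : ℂ) ^ (μ' 1 - μ 1) = 0 := zero_pow (by omega)
          simp [this]
      · have : (0 : ℂ) ^ (μ' 0 - μ 0) = 0 := zero_pow (by omega)
        simp [this]
  exact ⟨hz, by omega⟩
lemma linSys_cond {k : ℕ} {p : Fin k → Fin 3 → ℂ} {d : ℕ} {m : Fin k → ℕ}
    {F : MvPolynomial (Fin 3) ℂ} (hF : F ∈ linSys p d m) (i : Fin k) (ν : Fin 3 → ℕ)
    (hν : ν 0 + ν 1 + ν 2 < m i) : aeval (p i) (mderiv ν F) = 0 := by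
  have h2 := (Submodule.mem_inf.mp hF).2
  rw [Submodule.mem_iInf] at h2
  have h3 := h2 i
  rw [Submodule.mem_iInf] at h3
  have h4 := h3 ν
  rw [Submodule.mem_iInf] at h4
  have h5 := h4 hν
  simpa [LinearMap.mem_ker, LinearMap.comp_apply] using h5

lemma linSys_homog {k : ℕ} {p : Fin k → Fin 3 → ℂ} {d : ℕ} {m : Fin k → ℕ}
    {F : MvPolynomial (Fin 3) ℂ} (hF : F ∈ linSys p d m) : F.IsHomogeneous d :=
  (mem_homogeneousSubmodule _ _).mp (Submodule.mem_inf.mp hF).1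

lemma linSys_mem {k : ℕ} {p : Fin k → Fin 3 → ℂ} {d : ℕ} {m : Fin k → ℕ}
    {F : MvPolynomial (Fin 3) ℂ} (h1 : F.IsHomogeneous d)
    (h2 : ∀ i ν, ν 0 + ν 1 + ν 2 < m i → aeval (p i) (mderiv ν F) = 0) :
    F ∈ linSys p d m := by
  rw [linSys, Submodule.mem_inf]
  refine ⟨(mem_homogeneousSubmodule _ _).mpr h1, ?_⟩
  rw [Submodule.mem_iInf]
  intro i
  rw [Submodule.mem_iInf]
  intro ν
  rw [Submodule.mem_iInf]
  intro hν
  simpa [LinearMap.mem_ker, LinearMap.comp_apply] using h2 i ν hν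

set_option maxHeartbeats 2000000 in
lemma finrank_linSys (d n : ℕ) (hn : 1 ≤ n) (hd : 6 * n ≤ d) (p : Fin (n+1) → Fin 3 → ℂ)
    (hγ : p 0 2 ≠ 0)
    (hv : ∀ j : Fin n, p 0 2 * p j.succ 1 - p 0 1 * p j.succ 2 ≠ 0)
    (huv : ∀ j k : Fin n, j ≠ k →
      (p 0 2 * p j.succ 0 - p 0 0 * p j.succ 2) * (p 0 2 * p k.succ 1 - p 0 1 * p k.succ 2) ≠
      (p 0 2 * p k.succ 0 - p 0 0 * p k.succ 2) * (p 0 2 * p j.succ 1 - p 0 1 * p j.succ 2)) :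
    Module.finrank ℂ (linSys p d (qh n d)) = d - 6 * n + 1 := by
  classical
  set c₁ := p 0 0 / p 0 2 with hc₁
  set c₂ := p 0 1 / p 0 2 with hc₂
  set u : MvPolynomial (Fin 3) ℂ := X 0 - C c₁ * X 2 with hu
  set v : MvPolynomial (Fin 3) ℂ := X 1 - C c₂ * X 2 with hvdef
  have hu0 : aeval (p 0) u = 0 := by
    simp only [hu, map_sub, map_mul, aeval_X, aeval_C, algebraMap_eq, Algebra.algebraMap_self_apply, hc₁]
    field_simp
    ring
  have hv0 : aeval (p 0) v = 0 := by
    simp only [hvdef, map_sub, map_mul, aeval_X, aeval_C, algebraMap_eq, Algebra.algebraMap_self_apply, hc₂]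
    field_simp
    ring
  set uu : Fin n → ℂ := fun j => aeval (p j.succ) u with huu
  set vv : Fin n → ℂ := fun j => aeval (p j.succ) v with hvv
  have huuval : ∀ j, p 0 2 * uu j = p 0 2 * p j.succ 0 - p 0 0 * p j.succ 2 := by
    intro j
    simp only [huu, hu, map_sub, map_mul, aeval_X, aeval_C, algebraMap_eq, Algebra.algebraMap_self_apply, hc₁]
    field_simp
  have hvvval : ∀ j, p 0 2 * vv j = p 0 2 * p j.succ 1 - p 0 1 * p j.succ 2 := by
    intro j
    simp only [hvv, hvdef, map_sub, map_mul, aeval_X, aeval_C, algebraMap_eq, Algebra.algebraMap_self_apply, hc₂]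
    field_simp
  have hvvne : ∀ j, vv j ≠ 0 := by
    intro j hz
    apply hv j
    rw [← hvvval j, hz, mul_zero]
  set r : Fin n → ℂ := fun j => uu j / vv j with hr
  have hrinj : Function.Injective r := by
    intro j k hjk
    by_contra hne
    apply huv j k hne
    rw [← huuval, ← hvvval, ← huuval, ← hvvval]
    have : uu j * vv k = uu k * vv j := by
      have hjk : uu j / vv j = uu k / vv k := hjk
      rw [div_eq_div_iff (hvvne j) (hvvne k)] at hjk
      linear_combination hjk
    ring_nf
    linear_combination (p 0 2)^2 * this
  have hlin : ∀ j, aeval (p j.succ) (u - C (r j) * v) = 0 := by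
    intro j
    simp only [map_sub, map_mul, aeval_C, algebraMap_eq, Algebra.algebraMap_self_apply]
    show uu j - r j * vv j = 0
    rw [hr]
    rw [div_mul_cancel₀ _ (hvvne j), sub_self]
  set e : ℕ → (Fin 3 →₀ ℕ) := fun a => Finsupp.single 0 a + Finsupp.single 1 (d - a) with he
  have he0 : ∀ a, e a 0 = a := by intro a; simp [he, Finsupp.single_apply]
  have he1 : ∀ a, e a 1 = d - a := by intro a; simp [he, Finsupp.single_apply]
  have he2 : ∀ a, e a 2 = 0 := by intro a; simp [he, Finsupp.single_apply]
  set QOf : MvPolynomial (Fin 3) ℂ →ₗ[ℂ] Polynomial ℂ :=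
    { toFun := fun F => ∑ a ∈ Finset.range (d + 1),
        Polynomial.C (coeff (e a) (subAlg (-c₁) (-c₂) F)) * Polynomial.X ^ a
      map_add' := by
        intro F F'
        simp only [map_add, coeff_add, Polynomial.C_add, add_mul]
        rw [Finset.sum_add_distrib]
      map_smul' := by
        intro s F
        simp only [map_smul, coeff_smul, smul_eq_mul, Polynomial.C_mul, RingHom.id_apply]
        rw [Finset.smul_sum]
        refine Finset.sum_congr rfl fun a _ => ?_
        rw [Polynomial.smul_eq_C_mul, mul_assoc] } with hQOf
  have hqh0 : qh n d 0 = d := if_pos rfl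
  have hqhs : ∀ j : Fin n, qh n d j.succ = 6 := fun j => if_neg (Fin.succ_ne_zero j)
  have hsupp : ∀ F ∈ linSys p d (qh n d),
      ∀ μ ∈ (subAlg (-c₁) (-c₂) F).support, μ = e (μ 0) ∧ μ 0 ≤ d := by
    intro F hF μ hμ
    have h := support_structure (d := d) hu0 hv0 hγ (linSys_homog hF) ?_ μ hμ
    · refine ⟨?_, by omega⟩
      ext i; fin_cases i
      · show μ 0 = e (μ 0) 0
        rw [he0]
      · show μ 1 = e (μ 0) 1
        rw [he1]; omega
      · show μ 2 = e (μ 0) 2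
        rw [he2]; exact h.1
    · intro a b hab
      have hlt : (![a, b, 0] : Fin 3 → ℕ) 0 + ![a, b, 0] 1 + ![a, b, 0] 2 < qh n d 0 := by
        simpa [hqh0] using hab
      exact linSys_cond hF 0 _ hlt
  have hQcoeff : ∀ (F : MvPolynomial (Fin 3) ℂ) (a : ℕ), a ≤ d →
      (QOf F).coeff a = coeff (e a) (subAlg (-c₁) (-c₂) F) := by
    intro F a ha
    rw [hQOf]
    simp only [LinearMap.coe_mk, AddHom.coe_mk]
    rw [Polynomial.finset_sum_coeff]
    rw [Finset.sum_eq_single_of_mem a (Finset.mem_range.mpr (by omega))]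
    · simp [Polynomial.coeff_C_mul, Polynomial.coeff_X_pow]
    · intro b hb hba
      simp [Polynomial.coeff_C_mul, Polynomial.coeff_X_pow, Ne.symm hba]
  have hinj : ∀ F ∈ linSys p d (qh n d), QOf F = 0 → F = 0 := by
    intro F hF hQ
    have hG0 : subAlg (-c₁) (-c₂) F = 0 := by
      by_contra hne
      obtain ⟨μ, hμ⟩ := support_nonempty.mpr hne
      obtain ⟨hμe, hμle⟩ := hsupp F hF μ hμ
      have hcz : coeff (e (μ 0)) (subAlg (-c₁) (-c₂) F) = 0 := by
        rw [← hQcoeff F (μ 0) hμle, hQ, Polynomial.coeff_zero]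
      rw [← hμe] at hcz
      exact mem_support_iff.mp hμ hcz
    have hrec := subAlg_inv c₁ c₂ F
    rw [hG0, map_zero] at hrec
    exact hrec.symm
  have hkey : ∀ F ∈ linSys p d (qh n d), ∀ (j : Fin n) (a : ℕ),
      vv j ^ (d - a) * Polynomial.eval (r j) (Polynomial.derivative^[a] (QOf F))
        = aeval (p j.succ) (mderiv ![a, 0, 0] F) := by
    intro F hF j a
    conv_rhs => rw [← subAlg_inv c₁ c₂ F]
    rw [aeval_mderiv_subAlg c₁ c₂ (p j.succ) a 0]
    have hsub : (subAlg (-c₁) (-c₂) F).support ⊆ (Finset.range (d + 1)).image e := by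
      intro μ hμ
      obtain ⟨hμe, hμle⟩ := hsupp F hF μ hμ
      exact Finset.mem_image.mpr ⟨μ 0, Finset.mem_range.mpr (by omega), hμe.symm⟩
    rw [Finset.sum_subset hsub ?zero]
    case zero =>
      intro μ _ hμn
      rw [notMem_support_iff.mp hμn]
      simp
    rw [Finset.sum_image ?inje]
    case inje =>
      intro x _ y _ hxy
      have := congrArg (fun f => f 0) hxy
      simpa [he0] using this
    have hQexp : QOf F = ∑ a' ∈ Finset.range (d + 1),
        Polynomial.C (coeff (e a') (subAlg (-c₁) (-c₂) F)) * Polynomial.X ^ a' := by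
      rw [hQOf]; rfl
    rw [hQexp, Polynomial.iterate_derivative_sum]
    simp only [Polynomial.iterate_derivative_C_mul, Polynomial.iterate_derivative_X_pow_eq_C_mul,
      Polynomial.eval_finset_sum, Polynomial.eval_mul, Polynomial.eval_C, Polynomial.eval_pow,
      Polynomial.eval_X, Finset.mul_sum]
    refine Finset.sum_congr rfl fun a' ha' => ?_
    have ha'd : a' ≤ d := by
      have := Finset.mem_range.mp ha'
      omega
    rw [he0, he1, he2]
    have huuj : (aeval (p j.succ)) (X 0 - C c₁ * X 2) = uu j := rfl
    have hvvj : (aeval (p j.succ)) (X 1 - C c₂ * X 2) = vv j := rfl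
    rw [huuj, hvvj, Nat.descFactorial_zero, Nat.cast_one]
    rcases le_or_gt a a' with hle | hlt
    · have hvvpow : vv j ^ (d - a) = vv j ^ (a' - a) * vv j ^ (d - a' - 0) := by
        rw [← pow_add]
        congr 1
        omega
      have hrj : r j = uu j / vv j := by rw [hr]
      rw [hvvpow, hrj, div_pow]
      have hvne : vv j ^ (a' - a) ≠ 0 := pow_ne_zero _ (hvvne j)
      field_simp
    · rw [Nat.descFactorial_eq_zero_iff_lt.mpr hlt]
      simp
  set d' := d - 6 * n with hd'
  set D : Polynomial ℂ := ∏ j : Fin n, (Polynomial.X - Polynomial.C (r j)) ^ 6 with hD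
  have hDmonic : D.Monic := by
    apply Polynomial.monic_prod_of_monic
    intro j _
    exact (Polynomial.monic_X_sub_C (r j)).pow 6
  have hDnatdeg : D.natDegree = 6 * n := by
    rw [hD, Polynomial.natDegree_prod]
    · simp [Polynomial.natDegree_pow, Polynomial.natDegree_X_sub_C, Finset.sum_const, mul_comm]
    · intro j _
      exact ((Polynomial.monic_X_sub_C (r j)).pow 6).ne_zero
  have hdvd : ∀ F ∈ linSys p d (qh n d), D ∣ QOf F := by
    intro F hF
    by_cases hQ0 : QOf F = 0
    · rw [hQ0]; exact dvd_zero D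
    refine Finset.prod_dvd_of_coprime ?_ ?_
    · intro j _ k _ hjk
      exact (Polynomial.pairwise_coprime_X_sub_C hrinj hjk).pow
    · intro j _
      have h6 : 5 < (QOf F).rootMultiplicity (r j) := by
        apply Polynomial.lt_rootMultiplicity_of_isRoot_iterate_derivative_of_mem_nonZeroDivisors hQ0
          ?_ ?_
        · intro m hm
          have hlt6 : (![m, 0, 0] : Fin 3 → ℕ) 0 + ![m, 0, 0] 1 + ![m, 0, 0] 2 < qh n d j.succ := by
            simp [hqhs j]
            omega
          have hc := linSys_cond hF j.succ _ hlt6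
          have hk := hkey F hF j m
          rw [hc] at hk
          rcases mul_eq_zero.mp hk with h | h
          · exact absurd h (pow_ne_zero _ (hvvne j))
          · exact h
        · refine mem_nonZeroDivisors_of_ne_zero ?_
          norm_num [Nat.factorial]
      calc (Polynomial.X - Polynomial.C (r j)) ^ 6
          ∣ (Polynomial.X - Polynomial.C (r j)) ^ ((QOf F).rootMultiplicity (r j)) :=
            pow_dvd_pow _ (by omega)
        _ ∣ QOf F := Polynomial.pow_rootMultiplicity_dvd _ _
  have hdegQ : ∀ F : MvPolynomial (Fin 3) ℂ, QOf F ∈ Polynomial.degreeLT ℂ (d + 1) := by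
    intro F
    have hQexp : QOf F = ∑ a' ∈ Finset.range (d + 1),
        Polynomial.C (coeff (e a') (subAlg (-c₁) (-c₂) F)) * Polynomial.X ^ a' := by
      rw [hQOf]; rfl
    rw [hQexp]
    refine Submodule.sum_mem _ fun a ha => ?_
    rw [Polynomial.mem_degreeLT]
    refine lt_of_le_of_lt (Polynomial.degree_C_mul_X_pow_le a _) ?_
    exact_mod_cast Nat.cast_lt.mpr (Finset.mem_range.mp ha)
  set W : Submodule ℂ (Polynomial ℂ) :=
    Polynomial.degreeLT ℂ (d + 1) ⊓ (Ideal.span {D}).restrictScalars ℂ with hW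
  have hrangeW : ∀ F ∈ linSys p d (qh n d), QOf F ∈ W := by
    intro F hF
    refine Submodule.mem_inf.mpr ⟨hdegQ F, ?_⟩
    rw [Submodule.restrictScalars_mem, Ideal.mem_span_singleton]
    exact hdvd F hF
  have hFDlt : ∀ k : ℕ, FiniteDimensional ℂ (Polynomial.degreeLT ℂ k) := by
    intro k
    exact Module.Finite.equiv (Polynomial.degreeLTEquiv ℂ k).symm
  have hFDW : FiniteDimensional ℂ W := by
    have := hFDlt (d + 1)
    exact Submodule.finiteDimensional_of_le inf_le_left
  set mulD : Polynomial.degreeLT ℂ (d' + 1) →ₗ[ℂ] Polynomial ℂ :=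
    (LinearMap.mulLeft ℂ D).comp (Submodule.subtype _) with hmulD
  have hWle : W ≤ LinearMap.range mulD := by
    intro q hq
    obtain ⟨hq1, hq2⟩ := Submodule.mem_inf.mp hq
    rw [Submodule.restrictScalars_mem, Ideal.mem_span_singleton] at hq2
    obtain ⟨h, hh⟩ := hq2
    by_cases hh0 : h = 0
    · refine LinearMap.mem_range.mpr ⟨0, ?_⟩
      rw [map_zero, hh, hh0, mul_zero]
    · have hq0 : q ≠ 0 := by
        rw [hh]
        exact mul_ne_zero hDmonic.ne_zero hh0
      have hdq : q.natDegree < d + 1 := by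
        rw [Polynomial.natDegree_lt_iff_degree_lt hq0]
        exact Polynomial.mem_degreeLT.mp hq1
      have hnat : h.natDegree ≤ d' := by
        have hmul := Polynomial.natDegree_mul hDmonic.ne_zero hh0
        rw [← hh] at hmul
        omega
      have hdh : h ∈ Polynomial.degreeLT ℂ (d' + 1) := by
        rw [Polynomial.mem_degreeLT]
        calc h.degree ≤ (h.natDegree : WithBot ℕ) := Polynomial.degree_le_natDegree
          _ < ((d' + 1 : ℕ) : WithBot ℕ) := by exact_mod_cast Nat.lt_succ_of_le hnat
      refine LinearMap.mem_range.mpr ⟨⟨h, hdh⟩, ?_⟩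
      rw [hmulD]
      simp only [LinearMap.comp_apply, Submodule.subtype_apply, LinearMap.mulLeft_apply]
      exact hh.symm
  set Λ : linSys p d (qh n d) →ₗ[ℂ] W :=
    LinearMap.codRestrict W (QOf.comp (Submodule.subtype _)) (fun x => hrangeW x.1 x.2) with hΛ
  have hΛinj : Function.Injective Λ := by
    rw [injective_iff_map_eq_zero]
    intro x hx
    have hxv : QOf x.1 = 0 := by
      have := congrArg Subtype.val hx
      exact this
    exact Subtype.ext (hinj x.1 x.2 hxv)
  have hFDlin : FiniteDimensional ℂ (linSys p d (qh n d)) :=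
    FiniteDimensional.of_injective Λ hΛinj
  have hub : Module.finrank ℂ (linSys p d (qh n d)) ≤ d' + 1 := by
    have h1 : Module.finrank ℂ (linSys p d (qh n d)) ≤ Module.finrank ℂ W :=
      LinearMap.finrank_le_finrank_of_injective hΛinj
    have h2 : Module.finrank ℂ W ≤ Module.finrank ℂ (LinearMap.range mulD) := by
      have := hFDlt (d' + 1)
      exact Submodule.finrank_mono hWle
    have h3 : Module.finrank ℂ (LinearMap.range mulD) ≤
        Module.finrank ℂ (Polynomial.degreeLT ℂ (d' + 1)) := by
      have := hFDlt (d' + 1)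
      exact LinearMap.finrank_range_le mulD
    have h4 : Module.finrank ℂ (Polynomial.degreeLT ℂ (d' + 1)) = d' + 1 := by
      rw [(Polynomial.degreeLTEquiv ℂ (d' + 1)).finrank_eq]
      simp [Module.finrank_fin_fun]
    omega
  -- lower bound
  have hsX0 : subAlg c₁ c₂ (X 0) = u := by simp [subAlg, aeval_X, hu]
  have hsX1 : subAlg c₁ c₂ (X 1) = v := by simp [subAlg, aeval_X, hvdef]
  have hsC : ∀ x : ℂ, subAlg c₁ c₂ (C x) = C x := by
    intro x
    simp [subAlg, aeval_C, algebraMap_eq]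
  set PP : MvPolynomial (Fin 3) ℂ := ∏ j : Fin n, (X 0 - C (r j) * X 1) ^ 6 with hPP
  set MM : Fin (d' + 1) → MvPolynomial (Fin 3) ℂ :=
    fun c => PP * (X 0 ^ (c : ℕ) * X 1 ^ (d' - (c : ℕ))) with hMM
  set FF : Fin (d' + 1) → MvPolynomial (Fin 3) ℂ := fun c => subAlg c₁ c₂ (MM c) with hFF
  have hFFval : ∀ c : Fin (d' + 1), FF c =
      (∏ j : Fin n, (u - C (r j) * v) ^ 6) * (u ^ (c : ℕ) * v ^ (d' - (c : ℕ))) := by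
    intro c
    rw [hFF, hMM, hPP]
    simp only [map_mul, map_prod, map_pow, map_sub, hsX0, hsX1, hsC]
  have hFFhom : ∀ c : Fin (d' + 1), (FF c).IsHomogeneous d := by
    intro c
    apply subAlg_isHomogeneous
    rw [hMM]
    have h1 : PP.IsHomogeneous (6 * n) := by
      rw [hPP]
      have h := MvPolynomial.IsHomogeneous.prod Finset.univ
        (fun j : Fin n => ((X 0 - C (r j) * X 1 : MvPolynomial (Fin 3) ℂ)) ^ 6) (fun _ => 6) ?_
      · simpa [Finset.sum_const, Finset.card_univ, mul_comm] using h
      · intro j _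
        have := ((isHomogeneous_X ℂ (0 : Fin 3)).sub (isHomogeneous_C_mul_X (r j) (1 : Fin 3))).pow 6
        simpa using this
    have h2 : ((X 0 : MvPolynomial (Fin 3) ℂ) ^ (c : ℕ) *
        (X 1 : MvPolynomial (Fin 3) ℂ) ^ (d' - (c : ℕ))).IsHomogeneous ((c : ℕ) + (d' - (c : ℕ))) :=
      (isHomogeneous_X_pow _ _).mul (isHomogeneous_X_pow _ _)
    have h3 := h1.mul h2
    have hcd : (c : ℕ) ≤ d' := by omega
    have heq : 6 * n + ((c : ℕ) + (d' - (c : ℕ))) = d := by omega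
    rwa [heq] at h3
  have hFFmem : ∀ c : Fin (d' + 1), FF c ∈ linSys p d (qh n d) := by
    intro c
    apply linSys_mem (hFFhom c)
    intro i ν hν
    by_cases hi : i = 0
    · subst hi
      rw [hqh0] at hν
      refine vanish_of_mem_pow (J := Ideal.span {u, v}) ?_ ?_ hν
      · refine aeval_zero_of_mem_span ?_
        intro g hg
        rcases hg with rfl | hg
        · exact hu0
        · rw [Set.mem_singleton_iff] at hg
          rw [hg]
          exact hv0
      · rw [hFFval c]
        have hJu : u ∈ Ideal.span {u, v} := Ideal.subset_span (Set.mem_insert _ _)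
        have hJv : v ∈ Ideal.span {u, v} := Ideal.subset_span (Set.mem_insert_of_mem _ rfl)
        have h1 : (∏ j : Fin n, (u - C (r j) * v) ^ 6) ∈ (Ideal.span {u, v}) ^ (n * 6) := by
          rw [Finset.prod_pow]
          rw [pow_mul]
          refine Ideal.pow_mem_pow ?_ 6
          have := prod_mem_pow (Ideal.span {u, v}) Finset.univ (fun j : Fin n => u - C (r j) * v)
            (fun j _ => sub_mem hJu (Ideal.mul_mem_left _ _ hJv))
          simpa using this
        have h2 : u ^ (c : ℕ) * v ^ (d' - (c : ℕ)) ∈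
            (Ideal.span {u, v}) ^ ((c : ℕ) + (d' - (c : ℕ))) := by
          rw [pow_add]
          exact Ideal.mul_mem_mul (Ideal.pow_mem_pow hJu _) (Ideal.pow_mem_pow hJv _)
        have h3 := Ideal.mul_mem_mul h1 h2
        rw [← pow_add] at h3
        have hcd : (c : ℕ) ≤ d' := by omega
        have heq : n * 6 + ((c : ℕ) + (d' - (c : ℕ))) = d := by omega
        rwa [heq] at h3
    · have hisucc : i = (i.pred hi).succ := (Fin.succ_pred i hi).symm
      set j := i.pred hi with hj
      rw [hisucc] at hν ⊢
      rw [hqhs j] at hν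
      refine vanish_of_mem_pow (J := Ideal.span {u - C (r j) * v}) ?_ ?_ hν
      · refine aeval_zero_of_mem_span ?_
        intro g hg
        rw [Set.mem_singleton_iff] at hg
        rw [hg]
        exact hlin j
      · have hm : (u - C (r j) * v) ∈ Ideal.span {u - C (r j) * v} :=
          Ideal.subset_span (Set.mem_singleton _)
        have hm6 : (u - C (r j) * v) ^ 6 ∈ (Ideal.span {u - C (r j) * v}) ^ 6 :=
          Ideal.pow_mem_pow hm 6
        rw [hFFval c, ← Finset.mul_prod_erase Finset.univ _ (Finset.mem_univ j), mul_assoc]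
        exact Ideal.mul_mem_right _ _ hm6
  have hPPne : PP ≠ 0 := by
    have hev : eval (![1, 0, 0] : Fin 3 → ℂ) PP = 1 := by
      rw [hPP, map_prod]
      refine Finset.prod_eq_one fun j _ => ?_
      simp
    intro h0
    rw [h0, map_zero] at hev
    exact zero_ne_one hev
  have hFFindep : LinearIndependent ℂ FF := by
    rw [Fintype.linearIndependent_iff]
    intro g hg c₀
    have hM : (∑ c, g c • MM c) = 0 := by
      apply subAlg_injective c₁ c₂
      rw [map_sum, map_zero]
      simpa only [map_smul, ← hFF] using hg
    have hM2 : PP * (∑ c, g c • ((X 0 : MvPolynomial (Fin 3) ℂ) ^ (c : ℕ) *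
        (X 1 : MvPolynomial (Fin 3) ℂ) ^ (d' - (c : ℕ)))) = 0 := by
      rw [Finset.mul_sum, ← hM]
      refine Finset.sum_congr rfl fun c _ => ?_
      rw [hMM, mul_smul_comm]
    have hsum0 : (∑ c, g c • ((X 0 : MvPolynomial (Fin 3) ℂ) ^ (c : ℕ) *
        (X 1 : MvPolynomial (Fin 3) ℂ) ^ (d' - (c : ℕ)))) = 0 :=
      (mul_eq_zero.mp hM2).resolve_left hPPne
    have hcoeff := congrArg
      (coeff (Finsupp.single (0 : Fin 3) (c₀ : ℕ) + Finsupp.single (1 : Fin 3) (d' - (c₀ : ℕ)))) hsum0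
    rw [coeff_sum] at hcoeff
    rw [Finset.sum_eq_single_of_mem c₀ (Finset.mem_univ c₀)] at hcoeff
    · rw [coeff_smul, X_pow_eq_monomial, X_pow_eq_monomial, monomial_mul, coeff_monomial,
        if_pos rfl] at hcoeff
      simpa using hcoeff
    · intro c _ hcne
      rw [coeff_smul, X_pow_eq_monomial, X_pow_eq_monomial, monomial_mul, coeff_monomial,
        if_neg, smul_zero]
      intro hcc
      apply hcne
      have := congrArg (fun f => f 0) hcc
      simp only [Finsupp.add_apply, Finsupp.single_eq_same,
        Finsupp.single_eq_of_ne (show (0 : Fin 3) ≠ 1 by decide), add_zero] at this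
      exact Fin.ext (by omega)
  have hlb : d' + 1 ≤ Module.finrank ℂ (linSys p d (qh n d)) := by
    have hind' : LinearIndependent ℂ (fun c : Fin (d' + 1) =>
        (⟨FF c, hFFmem c⟩ : linSys p d (qh n d))) := by
      apply LinearIndependent.of_comp (Submodule.subtype _)
      exact hFFindep
    simpa using hind'.fintype_card_le_finrank
  omega
set_option maxHeartbeats 1000000 in
theorem special_L_d_d_sixn (d n : ℕ) (hn : 1 ≤ n) (hd : 6 * n ≤ d) :
    virtDim d (qh n d) = (d : ℤ) - 21 * n ∧
    Generically (n + 1) (fun p =>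
      projDim p d (qh n d) = (d : ℤ) - 6 * n ∧
      projDim p d (qh n d) > max (-1) (virtDim d (qh n d))) := by
  have h0 : qh n d 0 = d := if_pos rfl
  have hs : ∀ j : Fin n, qh n d j.succ = 6 := fun j => if_neg (Fin.succ_ne_zero j)
  have hvirt : virtDim d (qh n d) = (d : ℤ) - 21 * n := by
    rw [virtDim, Fin.sum_univ_succ, h0]
    have hsum : (∑ j : Fin n, ((qh n d j.succ : ℤ) * ((qh n d j.succ : ℤ) + 1)) / 2) = 21 * n := by
      have h21 : ∀ j : Fin n, ((qh n d j.succ : ℤ) * ((qh n d j.succ : ℤ) + 1)) / 2 = 21 := by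
        intro j
        rw [hs j]
        norm_num
      rw [Finset.sum_congr rfl fun j _ => h21 j, Finset.sum_const, Finset.card_univ,
        Fintype.card_fin]
      simp [nsmul_eq_mul, mul_comm]
    rw [hsum]
    have hdd : ((d : ℤ) * (d + 3)) / 2 = ((d : ℤ) * (d + 1)) / 2 + d := by
      have hr : (d : ℤ) * (d + 3) = d * (d + 1) + d * 2 := by ring
      rw [hr, Int.add_mul_ediv_right _ _ (by norm_num : (2:ℤ) ≠ 0)]
    rw [hdd]
    ring
  refine ⟨hvirt, ?_⟩
  classical
  set Up : Fin n → MvPolynomial (Fin (n+1) × Fin 3) ℂ := fun j =>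
    X (0, 2) * X (j.succ, 0) - X (0, 0) * X (j.succ, 2) with hUp
  set Vp : Fin n → MvPolynomial (Fin (n+1) × Fin 3) ℂ := fun j =>
    X (0, 2) * X (j.succ, 1) - X (0, 1) * X (j.succ, 2) with hVp
  set P : MvPolynomial (Fin (n+1) × Fin 3) ℂ :=
    X (0, 2) * ((∏ j : Fin n, Vp j) *
      ∏ z ∈ Finset.univ.offDiag, (Up z.1 * Vp z.2 - Up z.2 * Vp z.1)) with hP
  set w : Fin (n+1) × Fin 3 → ℂ := fun x =>
    if x.1 = 0 then (if x.2 = 2 then 1 else 0)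
    else (if x.2 = 0 then 1 else if x.2 = 1 then ((x.1 : ℕ) : ℂ) else 0) with hw
  have hw02 : w (0, 2) = 1 := by simp [hw]
  have hw00 : w (0, 0) = 0 := by simp [hw]
  have hw01 : w (0, 1) = 0 := by simp [hw]
  have hwj0 : ∀ j : Fin n, w (j.succ, 0) = 1 := by
    intro j; simp [hw, Fin.succ_ne_zero j]
  have hwj1 : ∀ j : Fin n, w (j.succ, 1) = ((j.succ : ℕ) : ℂ) := by
    intro j; simp [hw, Fin.succ_ne_zero j]
  have hwj2 : ∀ j : Fin n, w (j.succ, 2) = 0 := by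
    intro j; simp [hw, Fin.succ_ne_zero j]
  have hevU : ∀ j : Fin n, eval w (Up j) = 1 := by
    intro j
    rw [hUp]
    simp only [eval_mul, eval_sub, eval_X, hw02, hw00, hwj0 j, hwj2 j]
    ring
  have hevV : ∀ j : Fin n, eval w (Vp j) = ((j.succ : ℕ) : ℂ) := by
    intro j
    rw [hVp]
    simp only [eval_mul, eval_sub, eval_X, hw02, hw01, hwj1 j, hwj2 j]
    ring
  have hPne : P ≠ 0 := by
    intro hzero
    have hev : eval w P = 0 := by rw [hzero, map_zero]
    rw [hP, map_mul, map_mul, map_prod, map_prod, eval_X, hw02] at hev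
    simp only [one_mul, map_sub, map_mul] at hev
    rcases mul_eq_zero.mp hev with h | h
    · obtain ⟨j, _, hj⟩ := Finset.prod_eq_zero_iff.mp h
      rw [hevV j] at hj
      exact Nat.cast_ne_zero.mpr (Nat.succ_ne_zero (j : ℕ)) hj
    · obtain ⟨z, hz, hzz⟩ := Finset.prod_eq_zero_iff.mp h
      rw [hevU z.1, hevU z.2, hevV z.1, hevV z.2, one_mul, one_mul] at hzz
      have hne := (Finset.mem_offDiag.mp hz).2.2
      apply hne
      have hcc : ((z.2.succ : ℕ) : ℂ) = ((z.1.succ : ℕ) : ℂ) := sub_eq_zero.mp hzz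
      have h2 : (z.2.succ : ℕ) = (z.1.succ : ℕ) := by exact_mod_cast hcc
      have h3 : z.2.succ = z.1.succ := Fin.val_injective h2
      exact (Fin.succ_injective n h3).symm
  refine ⟨P, hPne, ?_⟩
  intro p hp hep
  set vp : Fin (n+1) × Fin 3 → ℂ := fun x => p x.1 x.2 with hvp
  rw [hP, map_mul, map_mul] at hep
  obtain ⟨h1, h23⟩ := mul_ne_zero_iff.mp hep
  obtain ⟨h2, h3⟩ := mul_ne_zero_iff.mp h23
  have hγ : p 0 2 ≠ 0 := by
    rw [eval_X] at h1
    exact h1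
  rw [map_prod] at h2
  rw [map_prod] at h3
  have hv' : ∀ j : Fin n, p 0 2 * p j.succ 1 - p 0 1 * p j.succ 2 ≠ 0 := by
    intro j
    have hne := Finset.prod_ne_zero_iff.mp h2 j (Finset.mem_univ j)
    rw [hVp] at hne
    simpa only [eval_mul, eval_sub, eval_X, hvp] using hne
  have huv' : ∀ j k : Fin n, j ≠ k →
      (p 0 2 * p j.succ 0 - p 0 0 * p j.succ 2) * (p 0 2 * p k.succ 1 - p 0 1 * p k.succ 2) ≠
      (p 0 2 * p k.succ 0 - p 0 0 * p k.succ 2) * (p 0 2 * p j.succ 1 - p 0 1 * p j.succ 2) := by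
    intro j k hjk
    have hmem : ((j, k) : Fin n × Fin n) ∈ (Finset.univ : Finset (Fin n)).offDiag :=
      Finset.mem_offDiag.mpr ⟨Finset.mem_univ _, Finset.mem_univ _, hjk⟩
    have hne := Finset.prod_ne_zero_iff.mp h3 (j, k) hmem
    intro heq
    apply hne
    rw [hUp, hVp]
    simp only [eval_sub, eval_mul, eval_X, hvp]
    rw [sub_eq_zero]
    exact heq
  have hrank := finrank_linSys d n hn hd p hγ hv' huv'
  constructor
  · show projDim p d (qh n d) = (d : ℤ) - 6 * n
    rw [projDim, hrank]
    omega
  · show projDim p d (qh n d) > max (-1) (virtDim d (qh n d))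
    rw [projDim, hrank, hvirt, gt_iff_lt, max_lt_iff]
    constructor <;> omega
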